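/- Let q ≥ 17 be an odd prime power and let a, c ∈ F_q with ac ≠ 0. Then the point V = ⟨(a,0,c)⟩ is H-covered. -/

import Mathlib

noncomputable section

/-- Three points of PG(2,q) are collinear if they have linearly dependent representatives. -/
def Coll3 {F : Type*} [Field F] (P Q R : Projectivization F (Fin 3 → F)) : Prop :=
  ¬ LinearIndependent F ![P.rep, Q.rep, R.rep]

/-- A point is `S`-covered if it lies on a line through two distinct points of `S`. -/
def PGCovered {F : Type*} [Field F] (S : Set (Projectivization F (Fin 3 → F)))
    (P : Projectivization F (Fin 3 → F)) : Prop :=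
  ∃ Q ∈ S, ∃ R ∈ S, Q ≠ R ∧ Coll3 P Q R

/-- A point not in `S` is `S`-free if it is not `S`-covered. -/
def PGFree {F : Type*} [Field F] (S : Set (Projectivization F (Fin 3 → F)))
    (P : Projectivization F (Fin 3 → F)) : Prop :=
  P ∉ S ∧ ¬ PGCovered S P

lemma vec_ne_zero {F : Type*} [Field F] (v : Fin 3 → F) (i : Fin 3) (h : v i ≠ 0) : v ≠ 0 :=
  fun hv => h (by simp [hv])

/-- The set `H = {⟨(1,s⁴,s²)⟩ : s ∈ F}` of points of PG(2,q). -/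
def HSet (F : Type*) [Field F] : Set (Projectivization F (Fin 3 → F)) :=
  {P | ∃ s : F, P = Projectivization.mk F ![1, s ^ 4, s ^ 2] (vec_ne_zero _ 0 (by simp))}

/-- The conic `C : XY = Z²` in PG(2,q).  (Membership does not depend on the choice of
representative since the equation is homogeneous.) -/
def conicC (F : Type*) [Field F] : Set (Projectivization F (Fin 3 → F)) :=
  {P | P.rep 0 * P.rep 1 = P.rep 2 ^ 2}

/-- An arc: a set of points no three of which are collinear. -/
def IsPGArc {F : Type*} [Field F] (S : Set (Projectivization F (Fin 3 → F))) : Prop :=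
  ∀ P ∈ S, ∀ Q ∈ S, ∀ R ∈ S, P ≠ Q → P ≠ R → Q ≠ R → ¬ Coll3 P Q R

/-- A complete arc: an arc which cannot be extended to a larger arc. -/
def IsCompletePGArc {F : Type*} [Field F] (S : Set (Projectivization F (Fin 3 → F))) : Prop :=
  IsPGArc S ∧ ∀ P ∉ S, ¬ IsPGArc (insert P S)


open Finset in
lemma hyperbola_card (F : Type*) [Field F] [Fintype F] [DecidableEq F] (h2 : (2:F) ≠ 0) :
    (Finset.univ.filter fun p : F × F => p.2 ^ 2 - p.1 ^ 2 = 1).card = Fintype.card F - 1 := by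
  have h := Finset.card_nbij' (s := Finset.univ.filter fun u : F => u ≠ 0)
    (t := Finset.univ.filter fun p : F × F => p.2 ^ 2 - p.1 ^ 2 = 1)
    (i := fun u => ((u⁻¹ - u)/2, (u⁻¹ + u)/2)) (j := fun p => p.2 - p.1)
    (by
      intro u hu
      simp only [mem_coe, mem_filter, mem_univ, true_and] at hu ⊢
      field_simp
      ring)
    (by
      intro p hp
      simp only [mem_coe, mem_filter, mem_univ, true_and] at hp ⊢
      intro h
      rw [sub_eq_zero] at h
      rw [h, sub_self] at hp
      exact one_ne_zero hp.symm)
    (by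
      intro u hu
      simp only [mem_coe, mem_filter, mem_univ, true_and] at hu
      field_simp
      ring)
    (by
      intro p hp
      simp only [mem_coe, mem_filter, mem_univ, true_and] at hp
      have hu : (p.2 - p.1) * (p.2 + p.1) = 1 := by linear_combination hp
      have hinv : (p.2 - p.1)⁻¹ = p.2 + p.1 := inv_eq_of_mul_eq_one_right hu
      have : ((((p.2 - p.1)⁻¹ - (p.2 - p.1))/2, ((p.2 - p.1)⁻¹ + (p.2 - p.1))/2) : F × F) = (p.1, p.2) := by
        rw [hinv]
        refine Prod.ext ?_ ?_ <;> · simp only []; field_simp; ring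
      simpa using this)
  rw [← h]
  rw [Finset.filter_ne' Finset.univ 0]
  simp

open Finset in
lemma exists_good (F : Type*) [Field F] [Fintype F] [DecidableEq F] (q : ℕ)
    (hcard : Fintype.card F = q) (hodd : Odd q) (hq : 17 ≤ q) (w : F) (hw : w ≠ 0) :
    ∃ k : F, k ≠ 0 ∧ k ^ 2 ≠ 1 ∧ ∃ y : F, y ≠ 0 ∧ y ^ 2 = w * (1 + k ^ 2) := by
  classical
  have hchar : ringChar F ≠ 2 := by
    intro h
    have := FiniteField.even_card_of_char_two h
    rw [hcard] at this
    rw [Nat.odd_iff] at hodd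
    omega
  have h2 : (2:F) ≠ 0 := Ring.two_ne_zero hchar
  -- fiber counting
  set pA : F → Prop := fun k => ∃ y : F, y ≠ 0 ∧ y ^ 2 = 1 + k ^ 2 with hpA
  set pZ : F → Prop := fun k => 1 + k ^ 2 = 0 with hpZ
  have hAZ : ∀ k, pA k → ¬ pZ k := by
    rintro k ⟨y, hy0, hy⟩ hz
    rw [hpZ] at hz
    rw [hz, pow_eq_zero_iff (by norm_num)] at hy
    exact hy0 hy
  set cy : F → ℕ := fun k => (Finset.univ.filter fun y : F => y ^ 2 = 1 + k ^ 2).card with hcy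
  have hfiber : ∀ k : F,
      ((Finset.univ.filter fun p : F × F => p.2 ^ 2 - p.1 ^ 2 = 1).filter
        fun p => p.1 = k).card = cy k := by
    intro k
    apply Finset.card_nbij' (i := fun p => p.2) (j := fun y => (k, y))
    · intro p hp
      simp only [mem_coe, mem_filter, mem_univ, true_and] at hp ⊢
      obtain ⟨h1, h2⟩ := hp
      rw [h2] at h1
      linear_combination h1
    · intro y hy
      simp only [mem_coe, mem_filter, mem_univ, true_and] at hy
      simp only [mem_coe, mem_filter, mem_univ, true_and, and_true]
      linear_combination hy
    · intro p hp
      simp only [mem_coe, mem_filter, mem_univ, true_and] at hp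
      rw [← hp.2]
    · intro y hy
      rfl
  have hsum : (Finset.univ.filter fun p : F × F => p.2 ^ 2 - p.1 ^ 2 = 1).card
      = ∑ k : F, cy k := by
    rw [Finset.card_eq_sum_card_fiberwise (f := fun p : F × F => p.1) (t := Finset.univ)
      (fun p _ => mem_univ _)]
    exact Finset.sum_congr rfl fun k _ => hfiber k
  have hcy2 : ∀ k, pA k → cy k = 2 := by
    rintro k ⟨y, hy0, hy⟩
    have : (Finset.univ.filter fun z : F => z ^ 2 = 1 + k ^ 2) = {y, -y} := by
      ext z
      simp only [mem_filter, mem_univ, true_and, mem_insert, mem_singleton]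
      constructor
      · intro hz
        have : (z - y) * (z + y) = 0 := by linear_combination hz - hy
        rcases mul_eq_zero.mp this with h | h
        · left; exact sub_eq_zero.mp h
        · right; exact eq_neg_of_add_eq_zero_left h
      · rintro (rfl | rfl)
        · exact hy
        · rw [neg_pow]; simp [hy]
    rw [hcy]
    simp only [this]
    rw [Finset.card_insert_of_notMem, Finset.card_singleton]
    simp only [mem_singleton]
    intro h
    apply hy0
    have : 2 * y = 0 := by linear_combination h
    rcases mul_eq_zero.mp this with h' | h'
    · exact absurd h' h2
    · exact h'
  have hcy1 : ∀ k, pZ k → cy k = 1 := by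
    intro k hz
    have : (Finset.univ.filter fun z : F => z ^ 2 = 1 + k ^ 2) = {0} := by
      ext z
      simp only [mem_filter, mem_univ, true_and, mem_singleton]
      rw [hpZ] at hz
      rw [hz, pow_eq_zero_iff (by norm_num : 2 ≠ 0)]
    rw [hcy]; simp [this]
  have hcy0 : ∀ k, ¬ pA k → ¬ pZ k → cy k = 0 := by
    intro k ha hz
    rw [hcy, Finset.card_eq_zero]
    rw [Finset.filter_eq_empty_iff]
    intro z _
    intro hzz
    by_cases h0 : z = 0
    · exact hz (by show (1:F) + k ^ 2 = 0; rw [← hzz, h0]; ring)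
    · exact ha ⟨z, h0, hzz⟩
  set A := (univ.filter pA).card with hA
  set Z := (univ.filter pZ).card with hZdef
  have e3 : (univ.filter fun k => ¬ pA k).filter pZ = univ.filter pZ := by
    rw [Finset.filter_filter]
    ext k
    simp only [mem_filter, mem_univ, true_and]
    exact ⟨fun h => h.2, fun h => ⟨fun ha => hAZ k ha h, h⟩⟩
  have hsplit : ∑ k : F, cy k = 2 * A + Z := by
    rw [← Finset.sum_filter_add_sum_filter_not Finset.univ pA cy]
    have e1 : ∑ k ∈ univ.filter pA, cy k = 2 * A := by
      rw [Finset.sum_congr rfl (fun k hk => hcy2 k (Finset.mem_filter.mp hk).2)]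
      rw [Finset.sum_const, hA, smul_eq_mul, mul_comm]
    have e2 : ∑ k ∈ univ.filter (fun k => ¬ pA k), cy k = Z := by
      rw [← Finset.sum_filter_add_sum_filter_not (univ.filter fun k => ¬ pA k) pZ cy, e3]
      have e4 : ∑ k ∈ (univ.filter fun k => ¬ pA k).filter (fun k => ¬ pZ k), cy k = 0 := by
        apply Finset.sum_eq_zero
        intro k hk
        simp only [Finset.mem_filter, mem_univ, true_and] at hk
        exact hcy0 k hk.1 hk.2
      rw [e4, Finset.sum_congr rfl (fun k hk => hcy1 k (Finset.mem_filter.mp hk).2)]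
      simp [hZdef]
    rw [e1, e2]
  have hq1 : q - 1 = 2 * A + Z := by
    rw [← hsplit, ← hsum, hyperbola_card F h2, hcard]
  have hZ2 : Z ≤ 2 := by
    by_cases hne : (univ.filter pZ).Nonempty
    · obtain ⟨r, hr⟩ := hne
      have hr' : 1 + r ^ 2 = 0 := (mem_filter.mp hr).2
      have hsub : univ.filter pZ ⊆ {r, -r} := by
        intro k hk
        have hk' : 1 + k ^ 2 = 0 := (mem_filter.mp hk).2
        have h0 : (k - r) * (k + r) = 0 := by linear_combination hk' - hr'
        simp only [mem_insert, mem_singleton]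
        rcases mul_eq_zero.mp h0 with h | h
        · left; exact sub_eq_zero.mp h
        · right; exact eq_neg_of_add_eq_zero_left h
      calc Z ≤ ({r, -r} : Finset F).card := Finset.card_le_card hsub
        _ ≤ 2 := le_trans (Finset.card_insert_le _ _) (by simp)
    · rw [Finset.not_nonempty_iff_eq_empty] at hne
      simp [hZdef, hne]
  set Bf := univ.filter (fun k => ¬ pA k ∧ ¬ pZ k) with hBf
  set B := Bf.card with hB
  have hpart : q = A + (Z + B) := by
    rw [← hcard, ← Finset.card_univ,
      ← Finset.card_filter_add_card_filter_not (s := univ) (p := pA)]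
    congr 1
    rw [← Finset.card_filter_add_card_filter_not
      (s := univ.filter fun k => ¬ pA k) (p := pZ), e3]
    congr 1
    rw [Finset.filter_filter]
  have hA7 : 7 ≤ A := by omega
  have hB7 : 7 ≤ B := by omega
  have hgood : ∃ G : Finset F, 7 ≤ G.card ∧
      ∀ k ∈ G, ∃ y : F, y ≠ 0 ∧ y ^ 2 = w * (1 + k ^ 2) := by
    by_cases hws : IsSquare w
    · obtain ⟨e, he⟩ := hws
      have he0 : e ≠ 0 := fun h => hw (by rw [he, h, mul_zero])
      refine ⟨univ.filter pA, hA7, fun k hk => ?_⟩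
      obtain ⟨y, hy0, hy⟩ := (mem_filter.mp hk).2
      exact ⟨e * y, mul_ne_zero he0 hy0, by rw [he]; linear_combination (e * e) * hy⟩
    · refine ⟨Bf, hB7, fun k hk => ?_⟩
      obtain ⟨hk1, hk2⟩ := (mem_filter.mp hk).2
      have hk2' : 1 + k ^ 2 ≠ 0 := hk2
      have hns : ¬ IsSquare (1 + k ^ 2) := by
        rintro ⟨z, hz⟩
        have hz0 : z ≠ 0 := by
          intro h
          exact hk2' (by rw [hz, h, mul_zero])
        exact hk1 ⟨z, hz0, by rw [sq]; exact hz.symm⟩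
      have h1 : quadraticChar F (w * (1 + k ^ 2)) = 1 := by
        rw [map_mul, quadraticChar_neg_one_iff_not_isSquare.mpr hws,
          quadraticChar_neg_one_iff_not_isSquare.mpr hns]
        ring
      obtain ⟨z, hz⟩ := (quadraticChar_one_iff_isSquare (mul_ne_zero hw hk2')).mp h1
      have hz0 : z ≠ 0 := by
        intro h
        exact (mul_ne_zero hw hk2') (by rw [hz, h, mul_zero])
      exact ⟨z, hz0, by rw [sq]; exact hz.symm⟩
  obtain ⟨G, hG7, hGy⟩ := hgood
  have h3 : ({0, 1, -1} : Finset F).card ≤ 3 := by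
    refine le_trans (Finset.card_insert_le _ _) (Nat.succ_le_succ ?_)
    exact le_trans (Finset.card_insert_le _ _) (by simp)
  have hpos : 0 < (G \ ({0, 1, -1} : Finset F)).card := by
    have := Finset.le_card_sdiff ({0, 1, -1} : Finset F) G
    omega
  obtain ⟨k, hk⟩ := Finset.card_pos.mp hpos
  rw [Finset.mem_sdiff] at hk
  obtain ⟨hkG, hknot⟩ := hk
  simp only [mem_insert, mem_singleton, not_or] at hknot
  obtain ⟨hk0, hk1, hkm1⟩ := hknot
  refine ⟨k, hk0, ?_, hGy k hkG⟩
  intro h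
  have h0 : (k - 1) * (k + 1) = 0 := by linear_combination h
  rcases mul_eq_zero.mp h0 with h' | h'
  · exact hk1 (sub_eq_zero.mp h')
  · exact hkm1 (eq_neg_of_add_eq_zero_left h')

lemma exists_smul_rep {F : Type*} [Field F] (v : Fin 3 → F) (hv : v ≠ 0) :
    ∃ α : Fˣ, (Projectivization.mk F v hv).rep = (α : F) • v := by
  obtain ⟨α, hα⟩ := (Projectivization.mk_eq_mk_iff F _ _
    (Projectivization.rep_nonzero _) hv).mp (Projectivization.mk_rep _)
  exact ⟨α, by rw [← hα, Units.smul_def]⟩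

/-- for `q ≥ 17`, the point `V = ⟨(a,0,c)⟩` with `ac ≠ 0` is `H`-covered. -/
theorem stmt4 (F : Type*) [Field F] [Fintype F] (q : ℕ) (hcard : Fintype.card F = q)
    (hodd : Odd q) (hq : 17 ≤ q) (a c : F) (hac : a * c ≠ 0) :
    PGCovered (HSet F)
      (Projectivization.mk F ![a, 0, c]
        (vec_ne_zero _ 0 (by simpa using left_ne_zero_of_mul hac))) := by
  
  have ha : a ≠ 0 := left_ne_zero_of_mul hac
  have hc : c ≠ 0 := right_ne_zero_of_mul hac
  letI : DecidableEq F := Classical.decEq F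
  obtain ⟨k, hk0, hk1, y, hy0, hy⟩ := exists_good F q hcard hodd hq (c * a⁻¹)
    (mul_ne_zero hc (inv_ne_zero ha))
  set s : F := y / k with hsdef
  set t : F := y with htdef
  have hs0 : s ≠ 0 := div_ne_zero hy0 hk0
  have ht0 : t ≠ 0 := hy0
  have hy' : a * y ^ 2 = c * (1 + k ^ 2) := by
    rw [hy]
    field_simp
  have key : a * (s ^ 2 * t ^ 2) = c * (s ^ 2 + t ^ 2) := by
    rw [hsdef, htdef]
    field_simp
    linear_combination y ^ 2 * hy'
  have hst : s ^ 2 ≠ t ^ 2 := by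
    rw [hsdef, htdef]
    intro h
    apply hk1
    rw [div_pow, div_eq_iff (pow_ne_zero 2 hk0)] at h
    exact mul_left_cancel₀ (pow_ne_zero 2 hy0) (by linear_combination -h)
  refine ⟨_, ⟨s, rfl⟩, _, ⟨t, rfl⟩, ?_, ?_⟩
  · intro h
    rw [Projectivization.mk_eq_mk_iff] at h
    obtain ⟨u, hu⟩ := h
    have h0 := congrFun hu 0
    have h2 := congrFun hu 2
    simp only [Pi.smul_apply, Units.smul_def, smul_eq_mul, Matrix.cons_val_zero,
      Matrix.cons_val_two, Matrix.tail_cons, Matrix.head_cons, mul_one] at h0 h2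
    rw [h0, one_mul] at h2
    exact hst h2.symm
  · intro hLI
    obtain ⟨α, hα⟩ := exists_smul_rep ![a, 0, c]
      (vec_ne_zero _ 0 (by simpa using left_ne_zero_of_mul hac))
    obtain ⟨β, hβ⟩ := exists_smul_rep ![1, s ^ 4, s ^ 2] (vec_ne_zero _ 0 (by simp))
    obtain ⟨γ, hγ⟩ := exists_smul_rep ![1, t ^ 4, t ^ 2] (vec_ne_zero _ 0 (by simp))
    have hα0 : (α : F) ≠ 0 := Units.ne_zero α
    have hβ0 : (β : F) ≠ 0 := Units.ne_zero β
    have hγ0 : (γ : F) ≠ 0 := Units.ne_zero γ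
    have hz := Fintype.linearIndependent_iff.mp hLI
      ![(s ^ 4 - t ^ 4) / a * (α : F)⁻¹, t ^ 4 * (β : F)⁻¹, -s ^ 4 * (γ : F)⁻¹]
      (by
        rw [Fin.sum_univ_three]
        simp only [Matrix.cons_val_zero, Matrix.cons_val_one, Matrix.head_cons,
          Matrix.cons_val_two, Matrix.tail_cons]
        rw [hα, hβ, hγ]
        funext i
        fin_cases i <;>
          simp only [Pi.add_apply, Pi.smul_apply, smul_eq_mul, Pi.zero_apply,
            Matrix.cons_val_zero, Matrix.cons_val_one, Matrix.head_cons,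
            Matrix.cons_val_two, Matrix.tail_cons, Matrix.cons_val_fin_one, Fin.isValue,
            Fin.zero_eta, Fin.mk_one, Fin.reduceFinMk]
        · field_simp
          ring
        · field_simp
          ring
        · clear_value s t
          field_simp
          linear_combination (t ^ 2 - s ^ 2) * key)
      1
    simp only [Matrix.cons_val_one, Matrix.head_cons] at hz
    rcases mul_eq_zero.mp hz with h | h
    · exact pow_ne_zero 4 ht0 h
    · exact hβ0 (inv_eq_zero.mp h)
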